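/- Let θ > 1, α < 1, C > 0, and let τ : (0,∞) → [0,∞) be a nonincreasing differentiable function satisfying τ'(s) + C·s^{-α}·τ(s)^{1/θ} ≤ 0 for all s > 0. Then there exists S > 0 such that τ(s) = 0 for all s ≥ S. -/

import Mathlib

theorem stmt_17 (θ α C : ℝ) (hθ : 1 < θ) (hα : α < 1) (hC : 0 < C)
    (τ : ℝ → ℝ)
    (hnonneg : ∀ s : ℝ, 0 < s → 0 ≤ τ s)
    (hdiff : ∀ s : ℝ, 0 < s → DifferentiableAt ℝ τ s)
    (hmono : AntitoneOn τ (Set.Ioi 0))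
    (hineq : ∀ s : ℝ, 0 < s → deriv τ s + C * s ^ (-α) * τ s ^ (1 / θ) ≤ 0) :
    ∃ S : ℝ, 0 < S ∧ ∀ s : ℝ, S ≤ s → τ s = 0 := by
  by_cases h0 : ∃ s : ℝ, 0 < s ∧ τ s = 0
  · obtain ⟨S, hS, hτS⟩ := h0
    refine ⟨S, hS, fun s hs => le_antisymm ?_ (hnonneg s (lt_of_lt_of_le hS hs))⟩
    have := hmono (Set.mem_Ioi.mpr hS) (Set.mem_Ioi.mpr (lt_of_lt_of_le hS hs)) hs
    linarith
  · exfalso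
    push_neg at h0
    have hpos : ∀ s : ℝ, 0 < s → 0 < τ s := fun s hs =>
      lt_of_le_of_ne (hnonneg s hs) (Ne.symm (h0 s hs))
    set p : ℝ := 1 - 1/θ with hp_def
    have hθ0 : (0:ℝ) < θ := by linarith
    have h1θ : 1/θ < 1 := by rw [div_lt_one hθ0]; exact hθ
    have hp : 0 < p := by simp only [hp_def]; linarith
    have h1α : (0:ℝ) < 1 - α := by linarith
    set K : ℝ := p * C / (1 - α) with hK_def
    have hK : 0 < K := by positivity
    set g : ℝ → ℝ := fun t => τ t ^ p + K * t ^ (1 - α) with hg_def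
    have hg : ∀ s : ℝ, 0 < s →
        HasDerivAt g (p * τ s ^ (p-1) * deriv τ s + K * ((1-α) * s ^ (-α))) s := by
      intro s hs
      have h1 : HasDerivAt (fun t => τ t ^ p) (p * τ s ^ (p-1) * deriv τ s) s := by
        have := (Real.hasDerivAt_rpow_const (x := τ s) (p := p)
          (Or.inl (ne_of_gt (hpos s hs)))).comp s (hdiff s hs).hasDerivAt
        exact this
      have h2 : HasDerivAt (fun t : ℝ => K * t ^ (1-α)) (K * ((1-α) * s ^ (1-α-1))) s :=
        (Real.hasDerivAt_rpow_const (x := s) (p := 1-α) (Or.inl hs.ne')).const_mul K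
      have h3 : (1:ℝ) - α - 1 = -α := by ring
      rw [h3] at h2
      exact h1.add h2
    have hderiv_le : ∀ s : ℝ, 0 < s → deriv g s ≤ 0 := by
      intro s hs
      rw [(hg s hs).deriv]
      have hτ := hpos s hs
      have h1 : deriv τ s ≤ -(C * s ^ (-α) * τ s ^ (1/θ)) := by
        have := hineq s hs; linarith
      have hfac : 0 ≤ p * τ s ^ (p-1) := by positivity
      have hmul : p * τ s ^ (p-1) * deriv τ s ≤
          p * τ s ^ (p-1) * (-(C * s ^ (-α) * τ s ^ (1/θ))) :=
        mul_le_mul_of_nonneg_left h1 hfac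
      have hcomb : τ s ^ (p-1) * τ s ^ (1/θ) = 1 := by
        rw [← Real.rpow_add hτ]
        have : p - 1 + 1/θ = 0 := by simp [hp_def]
        rw [this, Real.rpow_zero]
      have hKsimp : K * (1-α) = p * C := by
        rw [hK_def, div_mul_cancel₀ _ h1α.ne']
      have heq : p * τ s ^ (p-1) * -(C * s ^ (-α) * τ s ^ (1/θ))
          = -(K * ((1-α) * s ^ (-α))) := by
        linear_combination (-(p * C * s ^ (-α))) * hcomb + s ^ (-α) * hKsimp
      have hfin : p * τ s ^ (p-1) * deriv τ s ≤ -(K * ((1-α) * s ^ (-α))) :=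
        hmul.trans heq.le
      linarith [hfin]
    have hanti : AntitoneOn g (Set.Ioi 0) := by
      apply antitoneOn_of_deriv_nonpos (convex_Ioi 0)
      · exact fun x hx => ((hg x hx).differentiableAt).continuousAt.continuousWithinAt
      · intro x hx
        rw [interior_Ioi] at hx
        exact ((hg x hx).differentiableAt).differentiableWithinAt
      · intro x hx
        rw [interior_Ioi] at hx
        exact hderiv_le x hx
    -- pick s large
    have htend : Filter.Tendsto (fun s : ℝ => K * s ^ (1-α)) Filter.atTop Filter.atTop :=
      (tendsto_rpow_atTop h1α).const_mul_atTop hK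
    obtain ⟨s, hs1, hs2⟩ :=
      ((htend.eventually_gt_atTop (g 1)).and (Filter.eventually_ge_atTop 1)).exists
    have hs0 : (0:ℝ) < s := lt_of_lt_of_le one_pos hs2
    have hgs : g s ≤ g 1 := hanti (Set.mem_Ioi.mpr one_pos) (Set.mem_Ioi.mpr hs0) hs2
    have hτnn : 0 ≤ τ s ^ p := Real.rpow_nonneg (hnonneg s hs0) p
    have : g s = τ s ^ p + K * s ^ (1-α) := rfl
    linarith
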